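/- Let p be an odd prime and let C be a Cartan subgroup of GL₂(𝔽_p) with normalizer N in GL₂(𝔽_p). Then there exists a non-scalar matrix A ∈ C with trace 0; and every non-scalar A ∈ C with trace 0 satisfies: (a) A² is a scalar matrix; (b) −det(A) is a square in 𝔽_p if and only if C is a split Cartan subgroup; (c) for every g ∈ N, A·g·A⁻¹ = g if g ∈ C and A·g·A⁻¹ = −g if g ∈ N but g ∉ C. -/

import Mathlib

open Matrix

/-- The subgroup of invertible diagonal matrices in `GL₂(𝔽_p)`. -/
def diagGL (p : ℕ) : Subgroup (GL (Fin 2) (ZMod p)) where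
  carrier := {g | ∃ v : Fin 2 → ZMod p,
    (g : Matrix (Fin 2) (Fin 2) (ZMod p)) = Matrix.diagonal v}
  one_mem' := ⟨1, Matrix.diagonal_one.symm⟩
  mul_mem' := by
    rintro g h ⟨v, hv⟩ ⟨w, hw⟩
    exact ⟨v * w, by rw [Units.val_mul, hv, hw, Matrix.diagonal_mul_diagonal]; rfl⟩
  inv_mem' := by
    rintro g ⟨v, hv⟩
    exact ⟨Ring.inverse v, by rw [Matrix.coe_units_inv, hv, Matrix.inv_diagonal]⟩

/-- The subgroup of `GL₂(𝔽_p)` consisting of the units of a subalgebra `A` of the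
`2×2` matrix ring, i.e. the invertible matrices `g` with both `g` and `g⁻¹` in `A`. -/
def unitsIn (p : ℕ) (A : Subalgebra (ZMod p) (Matrix (Fin 2) (Fin 2) (ZMod p))) :
    Subgroup (GL (Fin 2) (ZMod p)) where
  carrier := {g | ((g : GL (Fin 2) (ZMod p)) : Matrix (Fin 2) (Fin 2) (ZMod p)) ∈ A ∧
    ((g⁻¹ : GL (Fin 2) (ZMod p)) : Matrix (Fin 2) (Fin 2) (ZMod p)) ∈ A}
  one_mem' := ⟨A.one_mem, by rw [inv_one]; exact A.one_mem⟩
  mul_mem' := fun {g h} hg hh => ⟨by rw [Units.val_mul]; exact A.mul_mem hg.1 hh.1,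
    by rw [_root_.mul_inv_rev, Units.val_mul]; exact A.mul_mem hh.2 hg.2⟩
  inv_mem' := fun {g} hg => ⟨hg.2, by rw [inv_inv]; exact hg.1⟩

/-- A split Cartan subgroup of `GL₂(𝔽_p)`: a conjugate of the subgroup of invertible
diagonal matrices. -/
def IsSplitCartan (p : ℕ) (C : Subgroup (GL (Fin 2) (ZMod p))) : Prop :=
  ∃ g : GL (Fin 2) (ZMod p), C = Subgroup.map (MulAut.conj g).toMonoidHom (diagGL p)

/-- A non-split Cartan subgroup of `GL₂(𝔽_p)`: the group of units of an
`𝔽_p`-subalgebra of the `2×2` matrix ring which is a field with `p²` elements. -/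
def IsNonsplitCartan (p : ℕ) (C : Subgroup (GL (Fin 2) (ZMod p))) : Prop :=
  ∃ A : Subalgebra (ZMod p) (Matrix (Fin 2) (Fin 2) (ZMod p)),
    IsField A ∧ Nat.card A = p ^ 2 ∧ C = unitsIn p A

/-- A Cartan subgroup of `GL₂(𝔽_p)` is a split or non-split Cartan subgroup. -/
def IsCartan (p : ℕ) (C : Subgroup (GL (Fin 2) (ZMod p))) : Prop :=
  IsSplitCartan p C ∨ IsNonsplitCartan p C

/-!
Statement 10: a Cartan subgroup `C` of `GL₂(𝔽_p)` contains a non-scalar trace-zero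
matrix `A`; every such `A` satisfies: `A²` is scalar, `−det(A)` is a square iff `C`
is split, and conjugation by `A` fixes elements of `C` and negates elements of the
normalizer of `C` outside `C`.
-/

section CartanAux
variable {p : ℕ} [Fact p.Prime]


lemma two_ne (hp : Odd p) : (2 : ZMod p) ≠ 0 := by
  have h2 : ¬ (p ∣ 2) := by
    intro h
    have := (Nat.prime_dvd_prime_iff_eq (Fact.out) Nat.prime_two).mp h
    subst this
    simp [Nat.odd_iff] at hp
  have : ((2:ℕ) : ZMod p) ≠ 0 := by
    rw [Ne, ZMod.natCast_eq_zero_iff]; exact h2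
  simpa using this

lemma CH (A : Matrix (Fin 2) (Fin 2) (ZMod p)) (h : A.trace = 0) :
    A * A = (-A.det) • (1 : Matrix (Fin 2) (Fin 2) (ZMod p)) := by
  have h11 : A 1 1 = -A 0 0 := by
    have := Matrix.trace_fin_two A
    rw [this] at h; linear_combination h
  ext i j
  fin_cases i <;> fin_cases j <;>
    simp [Matrix.mul_apply, Fin.sum_univ_two, Matrix.det_fin_two, Matrix.one_apply, h11] <;> ring


lemma centralizer (hp2 : (2:ZMod p) ≠ 0) (A B : Matrix (Fin 2) (Fin 2) (ZMod p))
    (hA : A ≠ 0) (ht : A.trace = 0) (hc : B * A = A * B) :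
    ∃ x y : ZMod p, B = x • 1 + y • A := by
  have h11 : A 1 1 = -A 0 0 := by
    have := Matrix.trace_fin_two A
    rw [this] at ht; linear_combination ht
  have e : ∀ i j, B i 0 * A 0 j + B i 1 * A 1 j = A i 0 * B 0 j + A i 1 * B 1 j := fun i j => by
    have := congrFun (congrFun hc i) j
    simpa [Matrix.mul_apply, Fin.sum_univ_two] using this
  have e00 := e 0 0; have e01 := e 0 1; have e10 := e 1 0
  rw [h11] at e01 e10
  by_cases hb : A 0 1 = 0
  · by_cases hcc : A 1 0 = 0
    · have ha : A 0 0 ≠ 0 := by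
        intro h0
        apply hA
        ext i j; fin_cases i <;> fin_cases j <;> simp_all
      refine ⟨(B 0 0 + B 1 1) / 2, (B 0 0 - B 1 1) / (2 * A 0 0), ?_⟩
      have hq : B 0 1 = 0 := by
        have h2 : (2 * A 0 0) * B 0 1 = 0 := by
          linear_combination -e01 + (B 0 0 - B 1 1) * hb
        rcases mul_eq_zero.mp h2 with h | h
        · exact absurd h (mul_ne_zero hp2 ha)
        · exact h
      have hr : B 1 0 = 0 := by
        have h2 : (2 * A 0 0) * B 1 0 = 0 := by
          linear_combination e10 + (B 0 0 - B 1 1) * hcc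
        rcases mul_eq_zero.mp h2 with h | h
        · exact absurd h (mul_ne_zero hp2 ha)
        · exact h
      ext i j
      fin_cases i <;> fin_cases j <;>
        simp [Matrix.one_apply, h11, hq, hr, hb, hcc] <;> field_simp <;> ring
    · refine ⟨B 0 0 - (B 1 0 / A 1 0) * A 0 0, B 1 0 / A 1 0, ?_⟩
      ext i j
      fin_cases i <;> fin_cases j <;> simp [Matrix.one_apply, h11] <;> field_simp <;>
        first
        | ring1
        | linear_combination e00
        | linear_combination -e00
        | linear_combination e10
        | linear_combination -e10
        | linear_combination e01
        | linear_combination -e01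
        | linear_combination -e01 + e00
        | linear_combination -e01 - e00
        | linear_combination e01 + e00
        | linear_combination e01 - e00
        | linear_combination e10 + e00
        | linear_combination e10 - e00
        | linear_combination -e10 + e00
        | linear_combination -e10 - e00
  · refine ⟨B 0 0 - (B 0 1 / A 0 1) * A 0 0, B 0 1 / A 0 1, ?_⟩
    ext i j
    fin_cases i <;> fin_cases j <;> simp [Matrix.one_apply, h11] <;> field_simp <;>
      first
      | ring1
      | linear_combination e00
      | linear_combination -e00
      | linear_combination e10
      | linear_combination -e10
      | linear_combination e01
      | linear_combination -e01
      | linear_combination -e01 + e00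
      | linear_combination -e01 - e00
      | linear_combination e01 + e00
      | linear_combination e01 - e00
      | linear_combination e10 + e00
      | linear_combination e10 - e00
      | linear_combination -e10 + e00
      | linear_combination -e10 - e00


lemma val_ne_zero (g : GL (Fin 2) (ZMod p)) : (g : Matrix (Fin 2) (Fin 2) (ZMod p)) ≠ 0 := by
  intro h
  have h1 := Units.mul_inv g
  rw [h, zero_mul] at h1
  exact one_ne_zero h1.symm

lemma nonscalar_of_trace0 (hp2 : (2:ZMod p) ≠ 0) (g : GL (Fin 2) (ZMod p))
    (ht : Matrix.trace (g : Matrix (Fin 2) (Fin 2) (ZMod p)) = 0) :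
    ¬ ∃ c : ZMod p, (g : Matrix (Fin 2) (Fin 2) (ZMod p)) = c • 1 := by
  rintro ⟨c, hc⟩
  rw [hc] at ht
  simp [Matrix.trace_smul, Matrix.trace_one] at ht
  rcases ht with h | h
  · exact val_ne_zero g (by rw [hc, h, zero_smul])
  · norm_num at h
    exact hp2 (by exact_mod_cast h)

lemma conj_cancel (h : GL (Fin 2) (ZMod p)) {M N : Matrix (Fin 2) (Fin 2) (ZMod p)}
    (e : h.val * M * (h⁻¹).val = h.val * N * (h⁻¹).val) : M = N := by
  have := congrArg (fun X => (h⁻¹).val * X * h.val) e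
  simpa only [Matrix.mul_assoc, Units.inv_mul, Units.mul_inv, Units.inv_mul_cancel_left,
    Units.mul_inv_cancel_left, mul_one, one_mul] using this

lemma split_rep {h : GL (Fin 2) (ZMod p)} {C : Subgroup (GL (Fin 2) (ZMod p))}
    (hCh : C = Subgroup.map (MulAut.conj h).toMonoidHom (diagGL p))
    {A : GL (Fin 2) (ZMod p)} (hA : A ∈ C)
    (ht : Matrix.trace (A : Matrix (Fin 2) (Fin 2) (ZMod p)) = 0) :
    ∃ a : ZMod p, a ≠ 0 ∧
      (A : Matrix (Fin 2) (Fin 2) (ZMod p)) =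
        h.val * Matrix.diagonal ![a, -a] * (h⁻¹).val := by
  rw [hCh] at hA
  obtain ⟨d, hd, hconj⟩ := hA
  obtain ⟨v, hv⟩ := hd
  have hAval : (A : Matrix (Fin 2) (Fin 2) (ZMod p)) = h.val * Matrix.diagonal v * (h⁻¹).val := by
    rw [← hconj]
    simp [MulAut.conj_apply, Units.val_mul, hv]
  have htr : v 0 + v 1 = 0 := by
    have : Matrix.trace ((h : Matrix (Fin 2) (Fin 2) (ZMod p)) * Matrix.diagonal v * (h⁻¹).val)
        = Matrix.trace (Matrix.diagonal v) := by
      rw [Matrix.trace_mul_comm, ← Matrix.mul_assoc, Units.inv_mul, one_mul]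
    rw [hAval, this, Matrix.trace_diagonal] at ht
    simpa [Fin.sum_univ_two] using ht
  have hv0 : v 0 ≠ 0 := by
    intro h0
    have hu : IsUnit (Matrix.diagonal v) := by
      rw [← hv]; exact ⟨d, rfl⟩
    have hdet := (Matrix.isUnit_iff_isUnit_det _).mp hu
    rw [Matrix.det_diagonal, Fin.prod_univ_two, h0, zero_mul] at hdet
    exact hdet.ne_zero rfl
  have hveq : v = ![v 0, -v 0] := by
    funext i
    fin_cases i
    · simp
    · show v 1 = ![v 0, -v 0] 1
      simp only [Matrix.cons_val_one, Matrix.head_cons, Matrix.cons_val_zero]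
      linear_combination htr
  rw [hveq] at hAval
  exact ⟨v 0, hv0, hAval⟩


-- conj of scalar
lemma conj_smul_one (h : GL (Fin 2) (ZMod p)) (c : ZMod p) :
    h.val * (c • (1 : Matrix (Fin 2) (Fin 2) (ZMod p))) * (h⁻¹).val = c • 1 := by
  rw [mul_smul_comm, mul_one, smul_mul_assoc, Units.mul_inv]

lemma diag_sq (a : ZMod p) :
    Matrix.diagonal ![a, -a] * Matrix.diagonal ![a, -a]
      = (a * a) • (1 : Matrix (Fin 2) (Fin 2) (ZMod p)) := by
  rw [Matrix.diagonal_mul_diagonal]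
  ext i j
  fin_cases i <;> fin_cases j <;> simp [Matrix.diagonal_apply, Matrix.one_apply]

lemma neg_diag (a : ZMod p) :
    -(Matrix.diagonal ![a, -a]) = Matrix.diagonal ![-a, a] := by
  have : -(![a, -a]) = ![-a, a] := by
    funext i; fin_cases i <;> simp
  rw [show (![-a, a] : Fin 2 → ZMod p) = -(![a,-a]) from this.symm, Matrix.diagonal_neg]
  rfl

lemma conj_conj (h : GL (Fin 2) (ZMod p)) (M : Matrix (Fin 2) (Fin 2) (ZMod p)) :
    (h⁻¹).val * (h.val * M * (h⁻¹).val) * h.val = M := by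
  simp only [Matrix.mul_assoc, Units.inv_mul, Units.mul_inv, Units.inv_mul_cancel_left,
    Units.mul_inv_cancel_left, mul_one, one_mul]

lemma key_prod (h : GL (Fin 2) (ZMod p)) (v w : Fin 2 → ZMod p) :
    (h.val * Matrix.diagonal v * (h⁻¹).val) * (h.val * Matrix.diagonal w * (h⁻¹).val)
      = h.val * Matrix.diagonal (v * w) * (h⁻¹).val := by
  simp only [Matrix.mul_assoc, Units.inv_mul_cancel_left]
  rw [show Matrix.diagonal v * (Matrix.diagonal w * (h⁻¹).val)
      = Matrix.diagonal (v * w) * (h⁻¹).val from by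
    rw [← Matrix.mul_assoc, Matrix.diagonal_mul_diagonal]
    rfl]


lemma mem_split_val {h : GL (Fin 2) (ZMod p)} {C : Subgroup (GL (Fin 2) (ZMod p))}
    (hCh : C = Subgroup.map (MulAut.conj h).toMonoidHom (diagGL p))
    {A : GL (Fin 2) (ZMod p)} (hA : A ∈ C) :
    ∃ v : Fin 2 → ZMod p,
      (A : Matrix (Fin 2) (Fin 2) (ZMod p)) = h.val * Matrix.diagonal v * (h⁻¹).val := by
  rw [hCh] at hA
  obtain ⟨d, ⟨v, hv⟩, hconj⟩ := hA
  refine ⟨v, ?_⟩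
  rw [← hconj]
  simp [MulAut.conj_apply, Units.val_mul, hv]

lemma split_comm {h : GL (Fin 2) (ZMod p)} {C : Subgroup (GL (Fin 2) (ZMod p))}
    (hCh : C = Subgroup.map (MulAut.conj h).toMonoidHom (diagGL p))
    {g A : GL (Fin 2) (ZMod p)} (hg : g ∈ C) (hA : A ∈ C) :
    (g : Matrix (Fin 2) (Fin 2) (ZMod p)) * A = (A : Matrix (Fin 2) (Fin 2) (ZMod p)) * g := by
  obtain ⟨v, hv⟩ := mem_split_val hCh hg
  obtain ⟨w, hw⟩ := mem_split_val hCh hA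
  rw [hv, hw, key_prod, key_prod, mul_comm v w]

lemma split_mem_of_comm (hp2 : (2:ZMod p) ≠ 0) {h : GL (Fin 2) (ZMod p)}
    {C : Subgroup (GL (Fin 2) (ZMod p))}
    (hCh : C = Subgroup.map (MulAut.conj h).toMonoidHom (diagGL p))
    {A : GL (Fin 2) (ZMod p)} (hA : A ∈ C)
    (ht : Matrix.trace (A : Matrix (Fin 2) (Fin 2) (ZMod p)) = 0)
    (g : GL (Fin 2) (ZMod p))
    (hcomm : (g : Matrix (Fin 2) (Fin 2) (ZMod p)) * A = (A : Matrix (Fin 2) (Fin 2) (ZMod p)) * g) :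
    g ∈ C := by
  obtain ⟨a, ha0, hArep⟩ := split_rep hCh hA ht
  obtain ⟨x, y, hxy⟩ := centralizer hp2 A.val g.val (val_ne_zero A) ht hcomm
  have hdiag : x • (1 : Matrix (Fin 2) (Fin 2) (ZMod p)) + y • Matrix.diagonal ![a, -a]
      = Matrix.diagonal ![x + y * a, x - y * a] := by
    ext i j
    fin_cases i <;> fin_cases j <;>
      simp [Matrix.diagonal_apply, Matrix.one_apply] <;> ring
  have hgl : g.val = h.val * Matrix.diagonal ![x + y * a, x - y * a] * (h⁻¹).val := by
    rw [hxy, hArep, ← hdiag]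
    rw [mul_add, add_mul]
    congr 1
    · rw [conj_smul_one]
    · rw [mul_smul_comm, smul_mul_assoc]
  rw [hCh]
  refine ⟨h⁻¹ * g * h, ⟨![x + y * a, x - y * a], ?_⟩, ?_⟩
  · show ((h⁻¹ * g * h : GL (Fin 2) (ZMod p)) : Matrix (Fin 2) (Fin 2) (ZMod p)) = _
    rw [Units.val_mul, Units.val_mul, hgl]
    exact conj_conj h _
  · show h * (h⁻¹ * g * h) * h⁻¹ = g
    group

lemma rep_sq {h : GL (Fin 2) (ZMod p)} {a : ZMod p} {X : Matrix (Fin 2) (Fin 2) (ZMod p)}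
    (hrep : X = h.val * Matrix.diagonal ![a, -a] * (h⁻¹).val) :
    X * X = (a * a) • 1 := by
  rw [hrep, key_prod]
  rw [show (![a, -a] : Fin 2 → ZMod p) * ![a, -a] = fun _ => a * a from by
    funext i; fin_cases i <;> simp <;> ring]
  rw [show Matrix.diagonal (fun _ : Fin 2 => a * a) = (a*a) • (1 : Matrix (Fin 2) (Fin 2) (ZMod p)) from by
    ext i j; fin_cases i <;> fin_cases j <;> simp [Matrix.diagonal_apply]]
  rw [conj_smul_one]

lemma split_pm (hp2 : (2:ZMod p) ≠ 0) {h : GL (Fin 2) (ZMod p)}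
    {C : Subgroup (GL (Fin 2) (ZMod p))}
    (hCh : C = Subgroup.map (MulAut.conj h).toMonoidHom (diagGL p))
    {A : GL (Fin 2) (ZMod p)} (hA : A ∈ C)
    (ht : Matrix.trace (A : Matrix (Fin 2) (Fin 2) (ZMod p)) = 0)
    {g : GL (Fin 2) (ZMod p)} (hg : g ∈ Subgroup.normalizer (C : Set (GL (Fin 2) (ZMod p)))) :
    g * A * g⁻¹ = A ∨ g * A * g⁻¹ = -A := by
  obtain ⟨a, ha0, hArep⟩ := split_rep hCh hA ht
  have hBmem : g * A * g⁻¹ ∈ C := by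
    have := (Subgroup.mem_normalizer_iff.mp hg A).mp hA
    simpa [mul_assoc] using this
  have hBval : ((g * A * g⁻¹ : GL (Fin 2) (ZMod p)) : Matrix (Fin 2) (Fin 2) (ZMod p))
      = g.val * A.val * (g⁻¹).val := by
    rw [Units.val_mul, Units.val_mul]
  have hBtr : Matrix.trace ((g * A * g⁻¹ : GL (Fin 2) (ZMod p)) : Matrix (Fin 2) (Fin 2) (ZMod p)) = 0 := by
    rw [hBval, Matrix.trace_mul_comm, ← Matrix.mul_assoc, Units.inv_mul, one_mul, ht]
  obtain ⟨u, hu0, hBrep⟩ := split_rep hCh hBmem hBtr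
  have hAA : A.val * A.val = (a * a) • 1 := rep_sq hArep
  have hBB2 : ((g * A * g⁻¹ : GL (Fin 2) (ZMod p)) : Matrix (Fin 2) (Fin 2) (ZMod p))
      * ((g * A * g⁻¹ : GL (Fin 2) (ZMod p)) : Matrix (Fin 2) (Fin 2) (ZMod p)) = (a * a) • 1 := by
    rw [hBval]
    simp only [Matrix.mul_assoc, Units.inv_mul_cancel_left]
    rw [show A.val * (A.val * (g⁻¹).val) = (a*a) • ((g⁻¹).val : Matrix (Fin 2) (Fin 2) (ZMod p)) from by
      rw [← Matrix.mul_assoc, hAA, smul_mul_assoc, one_mul]]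
    rw [mul_smul_comm, Units.mul_inv]
  have hBB1 := rep_sq hBrep
  have huu : u * u = a * a := by
    have heq : (u*u) • (1 : Matrix (Fin 2) (Fin 2) (ZMod p)) = (a*a) • 1 := by
      rw [← hBB1, hBB2]
    have := congrFun (congrFun heq 0) 0
    simpa [Matrix.one_apply] using this
  have hfac : (u - a) * (u + a) = 0 := by linear_combination huu
  rcases mul_eq_zero.mp hfac with h1 | h1
  · left
    apply Units.ext
    rw [hBrep, hArep, sub_eq_zero.mp h1]
  · right
    apply Units.ext
    rw [Units.val_neg, hBrep, show u = -a from eq_neg_of_add_eq_zero_left h1]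
    simp only [neg_neg]
    rw [← neg_diag, Matrix.mul_neg, Matrix.neg_mul, hArep]

-- generic: square of conjugate
lemma conj_sq {g A : GL (Fin 2) (ZMod p)} {c : ZMod p}
    (hAA : (A : Matrix (Fin 2) (Fin 2) (ZMod p)) * A = c • 1) :
    ((g * A * g⁻¹ : GL (Fin 2) (ZMod p)) : Matrix (Fin 2) (Fin 2) (ZMod p))
      * ((g * A * g⁻¹ : GL (Fin 2) (ZMod p)) : Matrix (Fin 2) (Fin 2) (ZMod p)) = c • 1 := by
  rw [Units.val_mul, Units.val_mul]
  simp only [Matrix.mul_assoc, Units.inv_mul_cancel_left]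
  rw [show A.val * (A.val * (g⁻¹).val) = c • ((g⁻¹).val : Matrix (Fin 2) (Fin 2) (ZMod p)) from by
    rw [← Matrix.mul_assoc, hAA, smul_mul_assoc, one_mul]]
  rw [mul_smul_comm, Units.mul_inv]

section Nonsplit
variable {K : Subalgebra (ZMod p) (Matrix (Fin 2) (Fin 2) (ZMod p))}

lemma ns_comm (hK : IsField K) {g A : GL (Fin 2) (ZMod p)}
    (hg : g ∈ unitsIn p K) (hA : A ∈ unitsIn p K) :
    (g : Matrix (Fin 2) (Fin 2) (ZMod p)) * A = (A : Matrix (Fin 2) (Fin 2) (ZMod p)) * g := by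
  have h2 := congrArg Subtype.val (hK.mul_comm ⟨g.val, hg.1⟩ ⟨A.val, hA.1⟩)
  simpa using h2

lemma ns_unit (hK : IsField K) {x : Matrix (Fin 2) (Fin 2) (ZMod p)} (hx : x ∈ K)
    (hx0 : x ≠ 0) :
    ∃ g : GL (Fin 2) (ZMod p), (g : Matrix (Fin 2) (Fin 2) (ZMod p)) = x ∧ g ∈ unitsIn p K := by
  obtain ⟨y, hy⟩ := hK.mul_inv_cancel (a := ⟨x, hx⟩) (by
    intro h0
    exact hx0 (congrArg Subtype.val h0))
  have hy2 : y * ⟨x, hx⟩ = 1 := by rw [hK.mul_comm]; exact hy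
  have hxy : x * y.val = 1 := by
    have := congrArg Subtype.val hy; simpa using this
  have hyx : y.val * x = 1 := by
    have := congrArg Subtype.val hy2; simpa using this
  exact ⟨⟨x, y.val, hxy, hyx⟩, rfl, ⟨hx, y.2⟩⟩

lemma ns_mem_of_comm (hp2 : (2:ZMod p) ≠ 0) (hK : IsField K)
    {A : GL (Fin 2) (ZMod p)} (hA : A ∈ unitsIn p K)
    (ht : Matrix.trace (A : Matrix (Fin 2) (Fin 2) (ZMod p)) = 0)
    (g : GL (Fin 2) (ZMod p))
    (hcomm : (g : Matrix (Fin 2) (Fin 2) (ZMod p)) * A = (A : Matrix (Fin 2) (Fin 2) (ZMod p)) * g) :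
    g ∈ unitsIn p K := by
  obtain ⟨x, y, hxy⟩ := centralizer hp2 A.val g.val (val_ne_zero A) ht hcomm
  have hgK : (g : Matrix (Fin 2) (Fin 2) (ZMod p)) ∈ K := by
    rw [hxy]
    exact K.add_mem (K.smul_mem K.one_mem x) (K.smul_mem hA.1 y)
  obtain ⟨g', hg'val, hg'mem⟩ := ns_unit hK hgK (val_ne_zero g)
  have : g = g' := Units.ext (by rw [hg'val])
  rw [this]; exact hg'mem

lemma ns_pm (hK : IsField K) {C : Subgroup (GL (Fin 2) (ZMod p))}
    (hCK : C = unitsIn p K)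
    {A : GL (Fin 2) (ZMod p)} (hA : A ∈ C)
    (ht : Matrix.trace (A : Matrix (Fin 2) (Fin 2) (ZMod p)) = 0)
    {g : GL (Fin 2) (ZMod p)} (hg : g ∈ Subgroup.normalizer (C : Set (GL (Fin 2) (ZMod p)))) :
    g * A * g⁻¹ = A ∨ g * A * g⁻¹ = -A := by
  have hBmem : g * A * g⁻¹ ∈ C := by
    have := (Subgroup.mem_normalizer_iff.mp hg A).mp hA
    simpa [mul_assoc] using this
  rw [hCK] at hA hBmem
  have hAA : A.val * A.val = (-(A.val.det)) • 1 := CH _ ht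
  have hBB := conj_sq (g := g) hAA
  set B := g * A * g⁻¹ with hBdef
  have hcm : B.val * A.val = A.val * B.val := ns_comm hK hBmem hA
  have hval : (B.val - A.val) * (B.val + A.val) = 0 := by
    rw [sub_mul, mul_add, mul_add, hBB, hAA, hcm]
    abel
  letI : Field K := hK.toField
  have h0 : ((⟨B.val, hBmem.1⟩ : K) - ⟨A.val, hA.1⟩) * (⟨B.val, hBmem.1⟩ + ⟨A.val, hA.1⟩) = 0 := by
    apply Subtype.ext
    push_cast
    exact hval
  rcases mul_eq_zero.mp h0 with h1 | h1
  · left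
    apply Units.ext
    have := congrArg Subtype.val (sub_eq_zero.mp h1)
    simpa using this
  · right
    apply Units.ext
    rw [Units.val_neg]
    have h2 : (⟨B.val, hBmem.1⟩ : K) = -⟨A.val, hA.1⟩ := eq_neg_of_add_eq_zero_left h1
    have := congrArg Subtype.val h2
    simpa using this

lemma ns_nonsquare (hp2 : (2:ZMod p) ≠ 0) (hK : IsField K)
    {A : GL (Fin 2) (ZMod p)} (hA : A ∈ unitsIn p K)
    (hns : ¬ ∃ c : ZMod p, (A : Matrix (Fin 2) (Fin 2) (ZMod p)) = c • 1)
    (ht : Matrix.trace (A : Matrix (Fin 2) (Fin 2) (ZMod p)) = 0) :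
    ¬ IsSquare (-(A : Matrix (Fin 2) (Fin 2) (ZMod p)).det) := by
  rintro ⟨s, hs⟩
  have hAA : A.val * A.val = (s * s) • 1 := by rw [CH _ ht, hs]
  have hsK : (s • (1 : Matrix (Fin 2) (Fin 2) (ZMod p))) ∈ K := K.smul_mem K.one_mem s
  have hval : (A.val - s • 1) * (A.val + s • 1) = 0 := by
    have hss : (s • (1 : Matrix (Fin 2) (Fin 2) (ZMod p))) * (s • 1) = (s*s) • 1 := by
      rw [smul_mul_assoc, mul_smul_comm, smul_smul, mul_one]
    rw [sub_mul, mul_add, mul_add, hAA, mul_smul_comm, mul_one, smul_mul_assoc, one_mul, hss]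
    abel
  letI : Field K := hK.toField
  have h0 : ((⟨A.val, hA.1⟩ : K) - ⟨s • 1, hsK⟩) * (⟨A.val, hA.1⟩ + ⟨s • 1, hsK⟩) = 0 := by
    apply Subtype.ext
    push_cast
    exact hval
  rcases mul_eq_zero.mp h0 with h1 | h1
  · have := congrArg Subtype.val (sub_eq_zero.mp h1)
    exact hns ⟨s, by simpa using this⟩
  · have h2 : (⟨A.val, hA.1⟩ : K) = -⟨s • 1, hsK⟩ := eq_neg_of_add_eq_zero_left h1
    have := congrArg Subtype.val h2
    refine hns ⟨-s, ?_⟩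
    simpa [neg_smul] using this

lemma ns_exists (hp2 : (2:ZMod p) ≠ 0) (hK : IsField K) (hcard : Nat.card K = p ^ 2) :
    ∃ A : GL (Fin 2) (ZMod p), A ∈ unitsIn p K ∧
      Matrix.trace (A : Matrix (Fin 2) (Fin 2) (ZMod p)) = 0 := by
  -- find a nonscalar element of K
  have hns : ∃ x : K, ¬ ∃ c : ZMod p, (x : Matrix (Fin 2) (Fin 2) (ZMod p)) = c • 1 := by
    by_contra hall
    push_neg at hall
    have hsurj : Function.Surjective (fun c : ZMod p => (⟨c • 1, K.smul_mem K.one_mem c⟩ : K)) := by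
      intro k
      obtain ⟨c, hc⟩ := hall k
      exact ⟨c, Subtype.ext hc.symm⟩
    have hle : Nat.card K ≤ Nat.card (ZMod p) := Nat.card_le_card_of_surjective _ hsurj
    rw [hcard, Nat.card_zmod] at hle
    have hp2' : 2 ≤ p := (Fact.out : p.Prime).two_le
    nlinarith
  obtain ⟨x, hx⟩ := hns
  set t : ZMod p := Matrix.trace (x : Matrix (Fin 2) (Fin 2) (ZMod p)) with htdef
  set B : Matrix (Fin 2) (Fin 2) (ZMod p) := (x : Matrix (Fin 2) (Fin 2) (ZMod p)) - (t / 2) • 1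
    with hBdef
  have hBK : B ∈ K := K.sub_mem x.2 (K.smul_mem K.one_mem _)
  have hBtr : Matrix.trace B = 0 := by
    rw [hBdef, Matrix.trace_sub, Matrix.trace_smul, Matrix.trace_one]
    have : (Fintype.card (Fin 2) : ZMod p) = 2 := by norm_num
    rw [this, smul_eq_mul, htdef, div_mul_cancel₀ _ hp2, sub_self]
  have hB0 : B ≠ 0 := by
    intro h0
    apply hx
    exact ⟨t / 2, by rw [← sub_eq_zero]; exact h0⟩
  obtain ⟨g, hgval, hgmem⟩ := ns_unit hK hBK hB0
  exact ⟨g, hgmem, by rw [hgval]; exact hBtr⟩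

end Nonsplit

lemma core {C : Subgroup (GL (Fin 2) (ZMod p))} {A : GL (Fin 2) (ZMod p)} (hA : A ∈ C)
    (hcomm : ∀ g ∈ C, (g : Matrix (Fin 2) (Fin 2) (ZMod p)) * A
        = (A : Matrix (Fin 2) (Fin 2) (ZMod p)) * g)
    (hmem : ∀ g : GL (Fin 2) (ZMod p), (g : Matrix (Fin 2) (Fin 2) (ZMod p)) * A
        = (A : Matrix (Fin 2) (Fin 2) (ZMod p)) * g → g ∈ C)
    (hpm : ∀ g ∈ Subgroup.normalizer (C : Set (GL (Fin 2) (ZMod p))), g * A * g⁻¹ = A ∨ g * A * g⁻¹ = -A) :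
    ∀ g ∈ Subgroup.normalizer (C : Set (GL (Fin 2) (ZMod p))), (g ∈ C → A * g * A⁻¹ = g) ∧ (g ∉ C → A * g * A⁻¹ = -g) := by
  intro g hgN
  constructor
  · intro hgC
    have hc := hcomm g hgC
    have hAg : A * g = g * A := Units.ext (by
      rw [Units.val_mul, Units.val_mul]; exact hc.symm)
    rw [hAg, mul_inv_cancel_right]
  · intro hgC
    rcases hpm g hgN with h1 | h1
    · exfalso
      apply hgC
      apply hmem
      have h2 : g * A = A * g := by
        have := congrArg (· * g) h1
        simpa [mul_assoc] using this
      have := congrArg Units.val h2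
      rw [Units.val_mul, Units.val_mul] at this
      exact this
    · have h2 : g * A = -A * g := by
        have := congrArg (· * g) h1
        simpa [mul_assoc] using this
      have h3 : A * g = -(g * A) := by
        rw [h2, neg_mul, neg_neg]
      rw [h3, neg_mul, mul_inv_cancel_right]

lemma traceConjGL (h : GL (Fin 2) (ZMod p)) (M : Matrix (Fin 2) (Fin 2) (ZMod p)) :
    Matrix.trace (h.val * M * (h⁻¹).val) = Matrix.trace M := by
  rw [Matrix.trace_mul_comm, ← Matrix.mul_assoc, Units.inv_mul, one_mul]

lemma split_square {h : GL (Fin 2) (ZMod p)} {C : Subgroup (GL (Fin 2) (ZMod p))}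
    (hCh : C = Subgroup.map (MulAut.conj h).toMonoidHom (diagGL p))
    {A : GL (Fin 2) (ZMod p)} (hA : A ∈ C)
    (ht : Matrix.trace (A : Matrix (Fin 2) (Fin 2) (ZMod p)) = 0) :
    IsSquare (-(A : Matrix (Fin 2) (Fin 2) (ZMod p)).det) := by
  obtain ⟨a, ha0, hArep⟩ := split_rep hCh hA ht
  refine ⟨a, ?_⟩
  have h1 : (h.val).det * ((h⁻¹).val).det = 1 := by
    rw [← Matrix.det_mul, Units.mul_inv, Matrix.det_one]
  have hdet : Matrix.det (A : Matrix (Fin 2) (Fin 2) (ZMod p)) = -(a*a) := by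
    rw [hArep, Matrix.det_mul, Matrix.det_mul, Matrix.det_diagonal, Fin.prod_univ_two]
    simp only [Matrix.cons_val_zero, Matrix.cons_val_one, Matrix.head_cons]
    linear_combination (-(a*a)) * h1
  rw [hdet, neg_neg]

lemma split_exists (hp2 : (2:ZMod p) ≠ 0) {h : GL (Fin 2) (ZMod p)}
    {C : Subgroup (GL (Fin 2) (ZMod p))}
    (hCh : C = Subgroup.map (MulAut.conj h).toMonoidHom (diagGL p)) :
    ∃ A ∈ C, Matrix.trace (A : Matrix (Fin 2) (Fin 2) (ZMod p)) = 0 := by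
  have hDD : Matrix.diagonal ![(1:ZMod p), -1] * Matrix.diagonal ![1, -1] = 1 := by
    ext i j
    fin_cases i <;> fin_cases j <;>
      simp [Matrix.mul_apply, Fin.sum_univ_two, Matrix.diagonal_apply, Matrix.one_apply]
  set dU : GL (Fin 2) (ZMod p) :=
    ⟨Matrix.diagonal ![1, -1], Matrix.diagonal ![1, -1], hDD, hDD⟩ with hdU
  refine ⟨h * dU * h⁻¹, ?_, ?_⟩
  · rw [hCh]
    refine ⟨dU, ⟨![1, -1], rfl⟩, ?_⟩
    simp [MulAut.conj_apply, mul_assoc]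
  · rw [Units.val_mul, Units.val_mul]
    rw [show (dU : Matrix (Fin 2) (Fin 2) (ZMod p)) = Matrix.diagonal ![1, -1] from rfl]
    rw [traceConjGL, Matrix.trace_diagonal]
    simp [Fin.sum_univ_two]

end CartanAux

theorem cartan_trace_zero_element (p : ℕ) [Fact p.Prime] (hp : Odd p)
    (C : Subgroup (GL (Fin 2) (ZMod p))) (hC : IsCartan p C) :
    (∃ A ∈ C, (¬ ∃ c : ZMod p, (A : Matrix (Fin 2) (Fin 2) (ZMod p)) = c • 1) ∧
      Matrix.trace (A : Matrix (Fin 2) (Fin 2) (ZMod p)) = 0) ∧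
    ∀ A : GL (Fin 2) (ZMod p), A ∈ C →
      (¬ ∃ c : ZMod p, (A : Matrix (Fin 2) (Fin 2) (ZMod p)) = c • 1) →
      Matrix.trace (A : Matrix (Fin 2) (Fin 2) (ZMod p)) = 0 →
      ((∃ c : ZMod p, ((A ^ 2 : GL (Fin 2) (ZMod p)) : Matrix (Fin 2) (Fin 2) (ZMod p)) = c • 1) ∧
        (IsSquare (-(A : Matrix (Fin 2) (Fin 2) (ZMod p)).det) ↔ IsSplitCartan p C) ∧
        ∀ g ∈ Subgroup.normalizer (C : Set (GL (Fin 2) (ZMod p))), (g ∈ C → A * g * A⁻¹ = g) ∧ (g ∉ C → A * g * A⁻¹ = -g)) := by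
  have hp2 : (2 : ZMod p) ≠ 0 := two_ne hp
  rcases hC with ⟨h, hCh⟩ | ⟨K, hK, hcard, hCK⟩
  · constructor
    · obtain ⟨A, hAmem, htr⟩ := split_exists hp2 hCh
      exact ⟨A, hAmem, nonscalar_of_trace0 hp2 A htr, htr⟩
    · intro A hA hns htr
      refine ⟨⟨-(Matrix.det (A : Matrix (Fin 2) (Fin 2) (ZMod p))), ?_⟩,
        iff_of_true (split_square hCh hA htr) ⟨h, hCh⟩,
        core hA (fun g hg => split_comm hCh hg hA)
          (fun g hcm => split_mem_of_comm hp2 hCh hA htr g hcm)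
          (fun g hg => split_pm hp2 hCh hA htr hg)⟩
      rw [Units.val_pow_eq_pow_val, sq]
      exact CH _ htr
  · subst hCK
    constructor
    · obtain ⟨A, hAmem, htr⟩ := ns_exists hp2 hK hcard
      exact ⟨A, hAmem, nonscalar_of_trace0 hp2 A htr, htr⟩
    · intro A hA hns htr
      refine ⟨⟨-(Matrix.det (A : Matrix (Fin 2) (Fin 2) (ZMod p))), ?_⟩,
        iff_of_false (ns_nonsquare hp2 hK hA hns htr) ?_,
        core hA (fun g hg => ns_comm hK hg hA)
          (fun g hcm => ns_mem_of_comm hp2 hK hA htr g hcm)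
          (fun g hg => ns_pm hK rfl hA htr hg)⟩
      · rw [Units.val_pow_eq_pow_val, sq]
        exact CH _ htr
      · rintro ⟨h', hCh'⟩
        exact (ns_nonsquare hp2 hK hA hns htr) (split_square hCh' hA htr)
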